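/- The family of additively piecewise syndetic subsets of ℕ is strongly partition regular: if A is additively piecewise syndetic and A = C₁ ∪ … ∪ C_r, then some Cᵢ is additively piecewise syndetic. -/
import Mathlib


def AddThick (T : Set ℕ) : Prop := ∀ k : ℕ, ∃ x : ℕ, ∀ i < k, x + i ∈ T

def AddSyndetic (A : Set ℕ) : Prop := ∃ k : ℕ, 0 < k ∧ ∀ x : ℕ, ∃ i < k, x + i ∈ A

/-- `A` is additively piecewise syndetic: it is the intersection of an additively
syndetic set with an additively thick set. -/
def AddPiecewiseSyndetic (A : Set ℕ) : Prop :=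
  ∃ S T : Set ℕ, AddSyndetic S ∧ AddThick T ∧ A = S ∩ T

/-- The set of points within distance `< k` (to the left) of `A`. -/
def Win (k : ℕ) (A : Set ℕ) : Set ℕ := {x | ∃ i < k, x + i ∈ A}

lemma ps_iff (A : Set ℕ) :
    AddPiecewiseSyndetic A ↔ ∃ k, 0 < k ∧ AddThick (Win k A) := by
  constructor
  · rintro ⟨S, T, ⟨k, hk, hS⟩, hT, rfl⟩
    refine ⟨k, hk, fun L => ?_⟩
    obtain ⟨x, hx⟩ := hT (L + k)
    refine ⟨x, fun j hj => ?_⟩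
    obtain ⟨i, hi, hiS⟩ := hS (x + j)
    exact ⟨i, hi, hiS, by rw [add_assoc]; exact hx (j + i) (by omega)⟩
  · rintro ⟨k, hk, hthick⟩
    refine ⟨A ∪ {x | ∀ i < k, x + i ∉ A}, Win k A, ⟨k, hk, fun x => ?_⟩, hthick, ?_⟩
    · by_cases h : ∃ i < k, x + i ∈ A
      · obtain ⟨i, hi, hiA⟩ := h
        exact ⟨i, hi, Or.inl hiA⟩
      · push_neg at h
        exact ⟨0, hk, Or.inr (by simpa using h)⟩
    · ext x
      constructor
      · intro hx
        exact ⟨Or.inl hx, 0, hk, by simpa using hx⟩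
      · rintro ⟨hS, i, hi, hiA⟩
        rcases hS with h | h
        · exact h
        · exact absurd hiA (h i hi)

lemma ps_nonempty {A : Set ℕ} (hA : AddPiecewiseSyndetic A) : A.Nonempty := by
  obtain ⟨k, hk, hthick⟩ := (ps_iff A).1 hA
  obtain ⟨x, hx⟩ := hthick 1
  obtain ⟨i, _, hiA⟩ := hx 0 one_pos
  exact ⟨x + 0 + i, hiA⟩

lemma key {A B C : Set ℕ} (hA : AddPiecewiseSyndetic A) (hsub : A ⊆ B ∪ C)
    (hC : ¬ AddPiecewiseSyndetic C) : AddPiecewiseSyndetic B := by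
  obtain ⟨k, hk, hthick⟩ := (ps_iff A).1 hA
  rw [ps_iff] at hC
  push_neg at hC
  refine (ps_iff B).2 ⟨k, hk, fun L => ?_⟩
  -- C is not PS: Win (L+k) C is not thick
  have hnt : ¬ AddThick (Win (L + k) C) := hC (L + k) (by omega)
  unfold AddThick at hnt
  push_neg at hnt
  obtain ⟨ℓ, hℓ⟩ := hnt
  obtain ⟨x, hx⟩ := hthick (ℓ + (L + k))
  obtain ⟨i, hi, hiC⟩ := hℓ x
  -- [x+i, x+i+L) ⊆ Win k B
  refine ⟨x + i, fun m hm => ?_⟩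
  have hxm : x + i + m ∈ Win k A := by
    have := hx (i + m) (by omega)
    rwa [← add_assoc] at this
  obtain ⟨p, hp, hpA⟩ := hxm
  refine ⟨p, hp, ?_⟩
  rcases hsub hpA with h | h
  · exact h
  · exfalso
    apply hiC
    refine ⟨m + p, by omega, ?_⟩
    rw [← add_assoc]
    exact h

lemma aux : ∀ (r : ℕ) (A : Set ℕ), AddPiecewiseSyndetic A →
    ∀ C : Fin r → Set ℕ, A ⊆ ⋃ i, C i → ∃ i, AddPiecewiseSyndetic (C i) := by
  intro r
  induction r with
  | zero =>
    intro A hA C hsub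
    obtain ⟨a, ha⟩ := ps_nonempty hA
    obtain ⟨s, ⟨i, rfl⟩, _⟩ := hsub ha
    exact i.elim0
  | succ r ih =>
    intro A hA C hsub
    by_cases hlast : AddPiecewiseSyndetic (C (Fin.last r))
    · exact ⟨Fin.last r, hlast⟩
    · have hB : AddPiecewiseSyndetic (⋃ i : Fin r, C i.castSucc) := by
        refine key hA (fun a ha => ?_) hlast
        obtain ⟨s, ⟨i, rfl⟩, hai⟩ := hsub ha
        rcases Fin.eq_castSucc_or_eq_last i with ⟨j, rfl⟩ | rfl
        · exact Or.inl (Set.mem_iUnion.2 ⟨j, hai⟩)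
        · exact Or.inr hai
      obtain ⟨i, hi⟩ := ih _ hB (fun i => C i.castSucc) subset_rfl
      exact ⟨i.castSucc, hi⟩

theorem addPiecewiseSyndetic_strongly_partition_regular
    (A : Set ℕ) (hA : AddPiecewiseSyndetic A) (r : ℕ) (C : Fin r → Set ℕ)
    (hcover : A = ⋃ i, C i)
    (hdisj : ∀ i j, i ≠ j → C i ∩ C j = ∅) :
    ∃ i, AddPiecewiseSyndetic (C i) := by
  exact aux r A hA C (hcover ▸ subset_rfl)
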